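/- arXiv:2007.03917 — 2 statements merged into one kernel-verified Lean document; each statement's English description precedes it below -/
import Mathlib

section
/- The Verma module V_{j,Δ} over A_k is a simple A_k-module if and only if h_k^n(j, Δ) ≠ 0 for every integer n ≥ 1. If h_k^n(j, Δ) = 0 for some n ≥ 1 and N is the minimal such n, then the submodule of V_{j,Δ} generated by (G⁻)^N v is isomorphic to V_{j−N,Δ}, it is the unique maximal proper submodule, and the simple quotient L_{j,Δ} = V_{j,Δ}/V_{j−N,Δ} has dimension N over ℂ. -/
noncomputable section

namespace BP

/-- The free `ℂ`-algebra on four generators `J, G⁺, G⁻, L`. -/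
abbrev F : Type := FreeAlgebra ℂ (Fin 4)

def jF : F := FreeAlgebra.ι ℂ 0
def gpF : F := FreeAlgebra.ι ℂ 1
def gmF : F := FreeAlgebra.ι ℂ 2
def lF : F := FreeAlgebra.ι ℂ 3

/-- `f_k(J, L) = 3J² − (k+3)L − (1/8)(k+1)(2k+3)·1`, as an element of the free algebra. -/
def fF (k : ℂ) : F :=
  3 * jF ^ 2 - algebraMap ℂ F (k + 3) * lF - algebraMap ℂ F (1/8 * (k + 1) * (2*k + 3))

/-- The defining relations of `A_k`: `L` is central, `[J,G⁺] = G⁺`, `[J,G⁻] = −G⁻`,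
`[G⁺,G⁻] = f_k(J,L)`. -/
inductive Rel (k : ℂ) : F → F → Prop
  | lj : Rel k (lF * jF) (jF * lF)
  | lgp : Rel k (lF * gpF) (gpF * lF)
  | lgm : Rel k (lF * gmF) (gmF * lF)
  | jgp : Rel k (jF * gpF - gpF * jF) gpF
  | jgm : Rel k (jF * gmF - gmF * jF) (-gmF)
  | gpgm : Rel k (gpF * gmF - gmF * gpF) (fF k)

/-- The unital associative `ℂ`-algebra `A_k`: the quotient of the free algebra on
`J, G⁺, G⁻, L` by the two-sided ideal generated by the defining relations. -/
def A (k : ℂ) : Type := RingQuot (Rel k)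

instance (k : ℂ) : Ring (A k) := inferInstanceAs (Ring (RingQuot (Rel k)))
instance (k : ℂ) : Algebra ℂ (A k) := inferInstanceAs (Algebra ℂ (RingQuot (Rel k)))

/-- The quotient map `F →ₐ[ℂ] A_k`. -/
def mk (k : ℂ) : F →ₐ[ℂ] A k := RingQuot.mkAlgHom ℂ (Rel k)

/-- The generator `J` of `A_k`. -/
def J (k : ℂ) : A k := mk k jF
/-- The generator `G⁺` of `A_k`. -/
def Gp (k : ℂ) : A k := mk k gpF
/-- The generator `G⁻` of `A_k`. -/
def Gm (k : ℂ) : A k := mk k gmF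
/-- The generator `L` of `A_k`. -/
def L (k : ℂ) : A k := mk k lF

/-- `f_k(x, y)` as a complex-valued function. -/
def fC (k x y : ℂ) : ℂ := 3 * x ^ 2 - (k + 3) * y - 1/8 * (k + 1) * (2*k + 3)

/-- `h_k^n(j, Δ) = Σ_{m=0}^{n−1} f_k(j−m, Δ)`. -/
def hC (k : ℂ) (n : ℕ) (j Δ : ℂ) : ℂ := ∑ m ∈ Finset.range n, fC k (j - m) Δ

/-- The left ideal of `A_k` by which one quotients to obtain the Verma module `V_{j,Δ}`:
it is generated by `G⁺`, `J − j·1` and `L − Δ·1`.  (The Verma module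
`A_k ⊗_{A_k^≥} ℂ_{j,Δ}` is canonically the quotient of `A_k` by this left ideal.) -/
def vermaIdeal (k j Δ : ℂ) : Submodule (A k) (A k) :=
  Submodule.span (A k)
    {Gp k, J k - algebraMap ℂ (A k) j, L k - algebraMap ℂ (A k) Δ}

/-- The Verma module `V_{j,Δ} = A_k ⊗_{A_k^≥} ℂ_{j,Δ}`, realised as `A_k / A_k·(G⁺, J−j, L−Δ)`. -/
abbrev Verma (k j Δ : ℂ) : Type := A k ⧸ vermaIdeal k j Δ

/-- The highest-weight vector `v = 1 ⊗ v` of the Verma module `V_{j,Δ}`. -/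
def hwv (k j Δ : ℂ) : Verma k j Δ := Submodule.Quotient.mk (1 : A k)

/-- The dimension of an `A_k`-module over `ℂ` (the `ℂ`-action being obtained by restricting
the `A_k`-action along `algebraMap ℂ (A k)`). -/
def rankOverC (k : ℂ) (M : Type) [AddCommGroup M] [Module (A k) M] : Cardinal :=
  letI : Module ℂ M := Module.compHom M (algebraMap ℂ (A k))
  Module.rank ℂ M

-- ### relations in A k
variable (k j Δ : ℂ)

lemma mk_rel {k : ℂ} {a b : F} (h : Rel k a b) : mk k a = mk k b := RingQuot.mkAlgHom_rel ℂ h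

/-- `f_k(J,L)` as element of `A k`. -/
def fA (k : ℂ) : A k := mk k (fF k)

lemma fA_eq : fA k = 3 * J k ^ 2 - algebraMap ℂ (A k) (k + 3) * L k
    - algebraMap ℂ (A k) (1/8 * (k + 1) * (2*k + 3)) := by
  simp only [fA, fF, map_sub, map_mul, map_pow, map_ofNat, AlgHom.commutes]
  rfl

lemma LJ : L k * J k = J k * L k := by
  have := mk_rel (k := k) Rel.lj; simpa [map_mul, L, J] using this
lemma LGp : L k * Gp k = Gp k * L k := by
  have := mk_rel (k := k) Rel.lgp; simpa [map_mul, L, Gp] using this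
lemma LGm : L k * Gm k = Gm k * L k := by
  have := mk_rel (k := k) Rel.lgm; simpa [map_mul, L, Gm] using this
lemma JGp : J k * Gp k = Gp k * J k + Gp k := by
  have := mk_rel (k := k) Rel.jgp
  simp only [map_sub, map_mul] at this
  simp only [J, Gp] ; rw [sub_eq_iff_eq_add] at this; rw [this, add_comm]
lemma JGm : J k * Gm k = Gm k * J k - Gm k := by
  have := mk_rel (k := k) Rel.jgm
  simp only [map_sub, map_mul, map_neg] at this
  simp only [J, Gm]; rw [sub_eq_iff_eq_add] at this; rw [this, neg_add_eq_sub]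
lemma GpGm : Gp k * Gm k = Gm k * Gp k + fA k := by
  have := mk_rel (k := k) Rel.gpgm
  simp only [map_sub, map_mul] at this
  simp only [Gp, Gm, fA]; rw [sub_eq_iff_eq_add] at this; rw [this, add_comm]

-- ### explicit model
abbrev M : Type := ℕ →₀ ℂ
variable (k j Δ : ℂ)
def eJ : Module.End ℂ M := Finsupp.lsum ℂ (fun n => (j - n) • Finsupp.lsingle n)
def eL : Module.End ℂ M := Finsupp.lsum ℂ (fun n => Δ • Finsupp.lsingle n)
def eGm : Module.End ℂ M := Finsupp.lsum ℂ (fun n => Finsupp.lsingle (n+1))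
def eGp : Module.End ℂ M := Finsupp.lsum ℂ (fun n => hC k n j Δ • Finsupp.lsingle (n-1))

lemma eJ_single (n : ℕ) (c : ℂ) :
    eJ j (Finsupp.single n c) = Finsupp.single n ((j - n) * c) := by
  simp only [eJ, Finsupp.lsum_single, LinearMap.smul_apply, Finsupp.lsingle_apply,
    Finsupp.smul_single', mul_comm]
lemma eL_single (n : ℕ) (c : ℂ) :
    eL Δ (Finsupp.single n c) = Finsupp.single n (Δ * c) := by
  simp only [eL, Finsupp.lsum_single, LinearMap.smul_apply, Finsupp.lsingle_apply,
    Finsupp.smul_single']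
lemma eGm_single (n : ℕ) (c : ℂ) :
    eGm (Finsupp.single n c) = Finsupp.single (n+1) c := by
  simp only [eGm, Finsupp.lsum_single, Finsupp.lsingle_apply]
lemma eGp_single (n : ℕ) (c : ℂ) :
    eGp k j Δ (Finsupp.single n c) = Finsupp.single (n-1) (hC k n j Δ * c) := by
  simp only [eGp, Finsupp.lsum_single, LinearMap.smul_apply, Finsupp.lsingle_apply,
    Finsupp.smul_single']

@[simp] lemma hC_zero : hC k 0 j Δ = 0 := by simp [hC]
lemma hC_succ (n : ℕ) : hC k (n+1) j Δ = hC k n j Δ + fC k (j - n) Δ := by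
  simp [hC, Finset.sum_range_succ]

lemma rel1 : eL Δ * eJ j = eJ j * eL Δ := by
  apply Finsupp.lhom_ext; intro n c
  simp only [Module.End.mul_apply, eJ_single, eL_single]
  congr 1; ring
lemma rel2 : eL Δ * eGp k j Δ = eGp k j Δ * eL Δ := by
  apply Finsupp.lhom_ext; intro n c
  simp only [Module.End.mul_apply, eGp_single, eL_single]
  congr 1; ring
lemma rel3 : eL Δ * eGm = eGm * eL Δ := by
  apply Finsupp.lhom_ext; intro n c
  simp only [Module.End.mul_apply, eGm_single, eL_single]
lemma rel4 : eJ j * eGp k j Δ - eGp k j Δ * eJ j = eGp k j Δ := by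
  apply Finsupp.lhom_ext; intro n c
  simp only [LinearMap.sub_apply, Module.End.mul_apply, eJ_single, eGp_single]
  rw [← Finsupp.single_sub]
  cases n with
  | zero => simp
  | succ m =>
    simp only [Nat.add_sub_cancel]
    congr 1; push_cast; ring
lemma rel5 : eJ j * eGm - eGm * eJ j = -eGm := by
  apply Finsupp.lhom_ext; intro n c
  simp only [LinearMap.sub_apply, Module.End.mul_apply, LinearMap.neg_apply, eJ_single, eGm_single]
  rw [← Finsupp.single_sub, ← Finsupp.single_neg]
  congr 1; push_cast; ring
lemma rel6 : eGp k j Δ * eGm - eGm * eGp k j Δ =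
    3 * (eJ j)^2 - algebraMap ℂ (Module.End ℂ M) (k+3) * eL Δ
      - algebraMap ℂ (Module.End ℂ M) (1/8 * (k + 1) * (2*k + 3)) := by
  apply Finsupp.lhom_ext; intro n c
  have h3 : (3 : Module.End ℂ M) = algebraMap ℂ (Module.End ℂ M) 3 := (map_ofNat (algebraMap ℂ (Module.End ℂ M)) 3).symm
  simp only [LinearMap.sub_apply, Module.End.mul_apply, h3, Module.algebraMap_end_apply,
    pow_two, eJ_single, eGp_single, eGm_single, eL_single, Finsupp.smul_single']
  cases n with
  | zero =>
    simp only [hC_zero, zero_mul, Finsupp.single_zero, sub_zero, Nat.cast_zero]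
    rw [← Finsupp.single_sub, ← Finsupp.single_sub]
    congr 1
    rw [hC_succ]
    simp only [fC, hC_zero]; push_cast; ring
  | succ m =>
    simp only [Nat.add_sub_cancel, Nat.succ_sub_one]
    rw [← Finsupp.single_sub, ← Finsupp.single_sub, ← Finsupp.single_sub]
    congr 1
    rw [hC_succ]
    simp only [fC]; push_cast; ring
-- ### the representation on M
def gen (k j Δ : ℂ) : Fin 4 → Module.End ℂ M := ![eJ j, eGp k j Δ, eGm, eL Δ]
def ρF (k j Δ : ℂ) : F →ₐ[ℂ] Module.End ℂ M := FreeAlgebra.lift ℂ (gen k j Δ)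
lemma ρF_j : ρF k j Δ jF = eJ j := by
  simp [ρF, jF, gen, FreeAlgebra.lift_ι_apply]
lemma ρF_gp : ρF k j Δ gpF = eGp k j Δ := by
  simp [ρF, gpF, gen, FreeAlgebra.lift_ι_apply]
lemma ρF_gm : ρF k j Δ gmF = eGm := by
  simp [ρF, gmF, gen, FreeAlgebra.lift_ι_apply]
lemma ρF_l : ρF k j Δ lF = eL Δ := by
  simp [ρF, lF, gen, FreeAlgebra.lift_ι_apply]

lemma ρF_rel : ∀ ⦃a b : F⦄, Rel k a b → ρF k j Δ a = ρF k j Δ b := by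
  intro a b h
  cases h with
  | lj => simp only [map_mul, ρF_j, ρF_l]; exact rel1 j Δ
  | lgp => simp only [map_mul, ρF_gp, ρF_l]; exact rel2 k j Δ
  | lgm => simp only [map_mul, ρF_gm, ρF_l]; exact rel3 Δ
  | jgp => simp only [map_sub, map_mul, ρF_j, ρF_gp]; exact rel4 k j Δ
  | jgm => simp only [map_sub, map_neg, map_mul, ρF_j, ρF_gm]; exact rel5 j
  | gpgm =>
    simp only [map_sub, map_mul, ρF_gp, ρF_gm]
    rw [rel6 k j Δ]
    simp only [fF, map_sub, map_mul, map_pow, map_ofNat, AlgHom.commutes, ρF_j, ρF_l]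

def ρ (k j Δ : ℂ) : A k →ₐ[ℂ] Module.End ℂ M :=
  RingQuot.liftAlgHom ℂ ⟨ρF k j Δ, ρF_rel k j Δ⟩
lemma ρ_mk (x : F) : ρ k j Δ (mk k x) = ρF k j Δ x := by
  exact RingQuot.liftAlgHom_mkAlgHom_apply (S := ℂ) (ρF k j Δ) (ρF_rel k j Δ) x

def φ (k j Δ : ℂ) : A k →ₗ[ℂ] M where
  toFun a := ρ k j Δ a (Finsupp.single 0 1)
  map_add' a b := by simp
  map_smul' c a := by simp

lemma φ_apply (a : A k) : φ k j Δ a = ρ k j Δ a (Finsupp.single 0 1) := rfl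

lemma ideal_le_ker : ∀ x ∈ vermaIdeal k j Δ, φ k j Δ x = 0 := by
  intro x hx
  induction hx using Submodule.span_induction with
  | mem x hx =>
    rcases hx with h | h | h
    · subst h; simp [φ_apply, Gp, ρ_mk, ρF_gp, eGp_single]
    · rw [h]; simp [φ_apply, J, map_sub, ρ_mk, ρF_j, eJ_single, Module.algebraMap_end_apply,
        Finsupp.smul_single']
    · rw [Set.mem_singleton_iff] at h; rw [h]
      simp [φ_apply, L, map_sub, ρ_mk, ρF_l, eL_single, Module.algebraMap_end_apply,
        Finsupp.smul_single']
  | zero => simp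
  | add x y _ _ hx hy => simp [hx, hy]
  | smul a x _ hx =>
    rw [smul_eq_mul, φ_apply, map_mul, Module.End.mul_apply, ← φ_apply, hx, map_zero]

def θ (k j Δ : ℂ) : Verma k j Δ →ₗ[ℂ] M :=
  (((vermaIdeal k j Δ).restrictScalars ℂ).liftQ (φ k j Δ)
      (fun x hx => ideal_le_ker k j Δ x hx)) ∘ₗ
    (Submodule.Quotient.restrictScalarsEquiv ℂ (vermaIdeal k j Δ)).symm.toLinearMap

lemma θ_mk (a : A k) : θ k j Δ (Submodule.Quotient.mk a) = φ k j Δ a := by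
  simp [θ, Submodule.Quotient.restrictScalarsEquiv_symm_mk]; rfl

-- ### the vectors wₙ = G⁻ⁿ • v and the action on them
def wn (k j Δ : ℂ) (n : ℕ) : Verma k j Δ := Gm k ^ n • hwv k j Δ

lemma smul_hwv (a : A k) : a • hwv k j Δ = Submodule.Quotient.mk a := by
  rw [hwv, ← Submodule.Quotient.mk_smul, smul_eq_mul, mul_one]

lemma csmul_comm (c : ℂ) (a : A k) (x : Verma k j Δ) : a • c • x = c • a • x := by
  rw [← algebraMap_smul (A k) c x, ← mul_smul, ← Algebra.commutes, mul_smul,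
    algebraMap_smul]

lemma ideal_smul_hwv {a : A k} (h : a ∈ vermaIdeal k j Δ) : a • hwv k j Δ = 0 := by
  rw [smul_hwv, Submodule.Quotient.mk_eq_zero]; exact h

lemma J_hwv : J k • hwv k j Δ = j • hwv k j Δ := by
  have h : (J k - algebraMap ℂ (A k) j) • hwv k j Δ = 0 :=
    ideal_smul_hwv k j Δ (Submodule.subset_span (by simp))
  rw [sub_smul, sub_eq_zero] at h
  rw [h, algebraMap_smul]

lemma L_hwv : L k • hwv k j Δ = Δ • hwv k j Δ := by
  have h : (L k - algebraMap ℂ (A k) Δ) • hwv k j Δ = 0 :=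
    ideal_smul_hwv k j Δ (Submodule.subset_span (by simp))
  rw [sub_smul, sub_eq_zero] at h
  rw [h, algebraMap_smul]

lemma Gp_hwv : Gp k • hwv k j Δ = 0 :=
  ideal_smul_hwv k j Δ (Submodule.subset_span (by simp))

lemma Gm_wn (n : ℕ) : Gm k • wn k j Δ n = wn k j Δ (n + 1) := by
  rw [wn, wn, ← mul_smul, ← pow_succ']

lemma J_wn (n : ℕ) : J k • wn k j Δ n = (j - n) • wn k j Δ n := by
  induction n with
  | zero => simpa [wn] using J_hwv k j Δ
  | succ n ih =>
    rw [← Gm_wn, ← mul_smul, JGm, sub_smul, mul_smul, ih, csmul_comm, Gm_wn]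
    nth_rewrite 2 [← one_smul ℂ (wn k j Δ (n+1))]
    rw [← sub_smul]
    congr 1; push_cast; ring

lemma L_wn (n : ℕ) : L k • wn k j Δ n = Δ • wn k j Δ n := by
  induction n with
  | zero => simpa [wn] using L_hwv k j Δ
  | succ n ih =>
    rw [← Gm_wn, ← mul_smul, LGm, mul_smul, ih, csmul_comm]

lemma fA_wn (n : ℕ) : fA k • wn k j Δ n = fC k (j - n) Δ • wn k j Δ n := by
  rw [fA_eq, sub_smul, sub_smul, mul_smul, mul_smul, pow_two, mul_smul, J_wn, csmul_comm,
    J_wn, smul_smul, L_wn, algebraMap_smul, algebraMap_smul, smul_smul]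
  have h3 : ∀ x : Verma k j Δ, (3 : A k) • x = (3 : ℂ) • x := fun x => by
    rw [← map_ofNat (algebraMap ℂ (A k)) 3, algebraMap_smul]
  rw [h3, smul_smul, fC, ← sub_smul, ← sub_smul]

  congr 1; ring

lemma Gp_wn (n : ℕ) : Gp k • wn k j Δ n = hC k n j Δ • wn k j Δ (n - 1) := by
  induction n with
  | zero => simpa [wn] using Gp_hwv k j Δ
  | succ n ih =>
    rw [← Gm_wn, ← mul_smul, GpGm, add_smul, mul_smul, ih, csmul_comm, Gm_wn, fA_wn,
      Nat.add_sub_cancel]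
    have hn : hC k n j Δ • wn k j Δ (n - 1 + 1) = hC k n j Δ • wn k j Δ n := by
      cases n with
      | zero => simp
      | succ m => rfl
    rw [hn, ← add_smul, hC_succ]

-- ### basis of the Verma module
lemma φ_Gm_pow (n : ℕ) : φ k j Δ (Gm k ^ n) = Finsupp.single n 1 := by
  induction n with
  | zero => simp [φ_apply]
  | succ n ih =>
    rw [pow_succ', φ_apply, map_mul, Module.End.mul_apply, ← φ_apply, ih]
    rw [Gm, ρ_mk, ρF_gm, eGm_single]

lemma θ_wn (n : ℕ) : θ k j Δ (wn k j Δ n) = Finsupp.single n 1 := by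
  rw [wn, smul_hwv, θ_mk, φ_Gm_pow]

lemma wn_li : LinearIndependent ℂ (wn k j Δ) := by
  apply LinearIndependent.of_comp (θ k j Δ)
  have : (θ k j Δ) ∘ (wn k j Δ) = fun n => Finsupp.single n (1 : ℂ) := by
    funext n; exact θ_wn k j Δ n
  rw [this]
  have h := (Finsupp.basisSingleOne (R := ℂ) (ι := ℕ)).linearIndependent
  simpa [Finsupp.coe_basisSingleOne] using h

lemma top_le_span : ∀ x : Verma k j Δ, x ∈ Submodule.span ℂ (Set.range (wn k j Δ)) := by
  set S := Submodule.span ℂ (Set.range (wn k j Δ)) with hS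
  have hwnS : ∀ n, wn k j Δ n ∈ S := fun n => Submodule.subset_span ⟨n, rfl⟩
  have hact : ∀ g : A k, (∀ n, g • wn k j Δ n ∈ S) → ∀ x ∈ S, g • x ∈ S := by
    intro g hg x hx
    induction hx using Submodule.span_induction with
    | mem x hx => obtain ⟨n, rfl⟩ := hx; exact hg n
    | zero => rw [smul_zero]; exact S.zero_mem
    | add x y _ _ hx hy => rw [smul_add]; exact S.add_mem hx hy
    | smul c x _ hx => rw [csmul_comm]; exact S.smul_mem c hx
  let T : Subalgebra ℂ (A k) :=
  { carrier := {a : A k | ∀ x ∈ S, a • x ∈ S}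
    mul_mem' := fun {a b} ha hb x hx => by rw [mul_smul]; exact ha _ (hb _ hx)
    add_mem' := fun {a b} ha hb x hx => by rw [add_smul]; exact S.add_mem (ha x hx) (hb x hx)
    algebraMap_mem' := fun c x hx => by rw [algebraMap_smul]; exact S.smul_mem c hx }
  have hJ : J k ∈ T := hact (J k) (fun n => by rw [J_wn]; exact S.smul_mem _ (hwnS n))
  have hGp : Gp k ∈ T := hact (Gp k) (fun n => by rw [Gp_wn]; exact S.smul_mem _ (hwnS _))
  have hGm : Gm k ∈ T := hact (Gm k) (fun n => by rw [Gm_wn]; exact hwnS _)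
  have hL : L k ∈ T := hact (L k) (fun n => by rw [L_wn]; exact S.smul_mem _ (hwnS n))
  have hT : ∀ a : A k, a ∈ T := by
    intro a
    obtain ⟨b, rfl⟩ := RingQuot.mkAlgHom_surjective ℂ (Rel k) a
    show mk k b ∈ T
    induction b using FreeAlgebra.induction with
    | grade0 c => rw [AlgHom.commutes]; exact T.algebraMap_mem c
    | grade1 i =>
      fin_cases i
      · exact hJ
      · exact hGp
      · exact hGm
      · exact hL
    | mul x y hx hy => rw [map_mul]; exact T.mul_mem hx hy
    | add x y hx hy => rw [map_add]; exact T.add_mem hx hy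
  intro x
  obtain ⟨a, rfl⟩ := Submodule.Quotient.mk_surjective _ x
  have h0 : (Submodule.Quotient.mk a : Verma k j Δ) = a • wn k j Δ 0 := by
    rw [wn, pow_zero, one_smul, smul_hwv]
  rw [h0]
  exact hT a (wn k j Δ 0) (hwnS 0)

def bV (k j Δ : ℂ) : Module.Basis ℕ ℂ (Verma k j Δ) :=
  Module.Basis.mk (wn_li k j Δ) (fun x _ => top_le_span k j Δ x)

lemma bV_eq (n : ℕ) : bV k j Δ n = wn k j Δ n := Module.Basis.mk_apply _ _ n

lemma hwv_ne_zero : hwv k j Δ ≠ 0 := by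
  have h : wn k j Δ 0 ≠ 0 := by rw [← bV_eq]; exact (bV k j Δ).ne_zero 0
  simpa [wn] using h

-- ### eigen-component extraction
lemma csmul_mem (W : Submodule (A k) (Verma k j Δ)) (c : ℂ) {y : Verma k j Δ}
    (hy : y ∈ W) : c • y ∈ W := by
  rw [← algebraMap_smul (A k) c y]; exact W.smul_mem _ hy

lemma repr_sum (x : Verma k j Δ) :
    x = ∑ i ∈ ((bV k j Δ).repr x).support, ((bV k j Δ).repr x) i • wn k j Δ i := by
  conv_lhs => rw [← (bV k j Δ).linearCombination_repr x]
  rw [Finsupp.linearCombination_apply, Finsupp.sum]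
  exact Finset.sum_congr rfl fun i _ => by rw [bV_eq]

def scaleMap (j c : ℂ) : (ℕ →₀ ℂ) →ₗ[ℂ] (ℕ →₀ ℂ) :=
  Finsupp.lsum ℂ (fun i => (j - i - c) • Finsupp.lsingle i)

lemma scaleMap_apply (c : ℂ) (f : ℕ →₀ ℂ) (i : ℕ) :
    scaleMap j c f i = (j - i - c) * f i := by
  classical
  rw [scaleMap, Finsupp.lsum_apply, Finsupp.sum_apply, Finsupp.sum]
  simp only [LinearMap.smul_apply, Finsupp.lsingle_apply, Finsupp.smul_single',
    Finsupp.single_apply]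
  rw [Finset.sum_ite_eq' f.support i fun i' => (j - i' - c) * f i']
  split
  · rfl
  · rename_i hi
    rw [Finsupp.notMem_support_iff.mp hi, mul_zero]

def Dop (k j Δ c : ℂ) : Verma k j Δ →ₗ[ℂ] Verma k j Δ where
  toFun x := (J k - algebraMap ℂ (A k) c) • x
  map_add' x y := smul_add _ _ _
  map_smul' d x := by simp only [RingHom.id_apply]; rw [csmul_comm]

lemma repr_D (c : ℂ) (x : Verma k j Δ) (i : ℕ) :
    (bV k j Δ).repr ((J k - algebraMap ℂ (A k) c) • x) i
      = (j - i - c) * ((bV k j Δ).repr x) i := by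
  have key : ((bV k j Δ).repr.toLinearMap ∘ₗ Dop k j Δ c)
      = scaleMap j c ∘ₗ (bV k j Δ).repr.toLinearMap := by
    apply (bV k j Δ).ext
    intro n
    simp only [LinearMap.comp_apply, LinearEquiv.coe_toLinearMap]
    rw [show Dop k j Δ c ((bV k j Δ) n) = (J k - algebraMap ℂ (A k) c) • (bV k j Δ) n from rfl,
      bV_eq, sub_smul, J_wn, algebraMap_smul, ← sub_smul, ← bV_eq, map_smul,
      Module.Basis.repr_self]
    apply Finsupp.ext; intro i
    rw [scaleMap_apply]
    rcases eq_or_ne n i with h | h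
    · subst h; simp
    · simp [Finsupp.single_apply, h]
  have := congrArg (fun (g : Verma k j Δ →ₗ[ℂ] (ℕ →₀ ℂ)) => g x i) key
  simpa [Dop, scaleMap_apply] using this

lemma weight_mem_aux (W : Submodule (A k) (Verma k j Δ)) (c : ℕ) :
    ∀ (x : Verma k j Δ), x ∈ W → ((bV k j Δ).repr x).support.card ≤ c →
      ∀ m : ℕ, ((bV k j Δ).repr x) m ≠ 0 → wn k j Δ m ∈ W := by
  classical
  induction c with
  | zero =>
    intro x _ hcard m hm
    rw [Nat.le_zero, Finset.card_eq_zero, Finsupp.support_eq_empty] at hcard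
    rw [hcard] at hm; simp at hm
  | succ c ih =>
    intro x hx hcard m hm
    set r := (bV k j Δ).repr x with hr
    by_cases hone : r.support ⊆ {m}
    · -- x = r m • wn m
      have hxs : x = r m • wn k j Δ m := by
        conv_lhs => rw [repr_sum k j Δ x]
        rw [← hr, Finset.sum_subset hone
          (fun i _ hi => by rw [Finsupp.notMem_support_iff.mp hi, zero_smul]),
          Finset.sum_singleton]
      have : (r m)⁻¹ • x ∈ W := csmul_mem k j Δ W _ hx
      rwa [hxs, smul_smul, inv_mul_cancel₀ hm, one_smul] at this
    · obtain ⟨m', hm's, hm'ne⟩ : ∃ m', m' ∈ r.support ∧ m' ≠ m := by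
        by_contra hcon
        push_neg at hcon
        exact hone fun a ha => Finset.mem_singleton.mpr (hcon a ha)
      set y := (J k - algebraMap ℂ (A k) (j - m')) • x with hy
      have hyW : y ∈ W := W.smul_mem _ hx
      have hrepr : ∀ i : ℕ, (bV k j Δ).repr y i = ((m' : ℂ) - i) * r i := by
        intro i
        rw [hy, repr_D, ← hr]
        congr 1; ring
      have hsub : ((bV k j Δ).repr y).support ⊆ r.support.erase m' := by
        intro i hi
        rw [Finsupp.mem_support_iff, hrepr] at hi
        rcases mul_ne_zero_iff.mp hi with ⟨h1, h2⟩
        exact Finset.mem_erase.mpr ⟨fun hc => h1 (by rw [hc]; ring), Finsupp.mem_support_iff.mpr h2⟩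
      have hcard' : ((bV k j Δ).repr y).support.card ≤ c := by
        have h1 : ((bV k j Δ).repr y).support.card < c + 1 :=
          lt_of_le_of_lt (Finset.card_le_card hsub)
            (lt_of_lt_of_le (Finset.card_erase_lt_of_mem hm's) hcard)
        exact Nat.lt_succ_iff.mp h1
      have hym : (bV k j Δ).repr y m ≠ 0 := by
        rw [hrepr]
        exact mul_ne_zero (fun hc => hm'ne (Nat.cast_injective (sub_eq_zero.mp hc))) hm
      exact ih y hyW hcard' m hym

-- ### more action formulas
lemma Gmpow_wn (t n : ℕ) : Gm k ^ t • wn k j Δ n = wn k j Δ (n + t) := by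
  induction t with
  | zero => simp
  | succ t ih => rw [pow_succ', mul_smul, ih, Gm_wn]; rfl

lemma Gppow_wn (d n : ℕ) :
    Gp k ^ d • wn k j Δ n =
      (∏ i ∈ Finset.range d, hC k (n - i) j Δ) • wn k j Δ (n - d) := by
  induction d with
  | zero => simp
  | succ d ih =>
    rw [pow_succ', mul_smul, ih, csmul_comm, Gp_wn, smul_smul, Finset.prod_range_succ,
      Nat.sub_sub]

lemma Gm_mem (W : Submodule (A k) (Verma k j Δ)) {m : ℕ} (h : wn k j Δ m ∈ W) :
    wn k j Δ (m + 1) ∈ W := by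
  rw [← Gm_wn]; exact W.smul_mem _ h

lemma Gp_desc (W : Submodule (A k) (Verma k j Δ)) {m : ℕ} (h : wn k j Δ (m + 1) ∈ W)
    (hne : hC k (m + 1) j Δ ≠ 0) : wn k j Δ m ∈ W := by
  have h1 : Gp k • wn k j Δ (m + 1) ∈ W := W.smul_mem _ h
  rw [Gp_wn, Nat.add_sub_cancel] at h1
  have h2 := csmul_mem k j Δ W (hC k (m+1) j Δ)⁻¹ h1
  rwa [smul_smul, inv_mul_cancel₀ hne, one_smul] at h2

lemma desc_zero (W : Submodule (A k) (Verma k j Δ)) (m : ℕ) (h : wn k j Δ m ∈ W)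
    (hne : ∀ n, 1 ≤ n → n ≤ m → hC k n j Δ ≠ 0) : wn k j Δ 0 ∈ W := by
  induction m with
  | zero => exact h
  | succ m ih =>
    exact ih (Gp_desc k j Δ W h (hne (m+1) (Nat.succ_le_succ (Nat.zero_le m)) le_rfl))
      (fun n h1 h2 => hne n h1 (Nat.le_succ_of_le h2))

lemma top_of_wn0 (W : Submodule (A k) (Verma k j Δ)) (h : wn k j Δ 0 ∈ W) : W = ⊤ := by
  rw [eq_top_iff]
  intro x _
  obtain ⟨a, rfl⟩ := Submodule.Quotient.mk_surjective _ x
  have h0 : (Submodule.Quotient.mk a : Verma k j Δ) = a • wn k j Δ 0 := by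
    rw [wn, pow_zero, one_smul, smul_hwv]
  rw [h0]
  exact W.smul_mem a h

-- ### the maximal submodule
lemma wn_ne_zero (m : ℕ) : wn k j Δ m ≠ 0 := by
  rw [← bV_eq]; exact (bV k j Δ).ne_zero m

def Uc (k j Δ : ℂ) (N : ℕ) : Submodule ℂ (Verma k j Δ) :=
  Submodule.span ℂ (wn k j Δ '' Set.Ici N)

lemma Uc_smul_mem {N : ℕ} (hN : hC k N j Δ = 0) (a : A k) {x : Verma k j Δ}
    (hx : x ∈ Uc k j Δ N) : a • x ∈ Uc k j Δ N := by
  set S := Uc k j Δ N with hS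
  have hwnS : ∀ n, N ≤ n → wn k j Δ n ∈ S := fun n hn => Submodule.subset_span ⟨n, hn, rfl⟩
  have hact : ∀ g : A k, (∀ n, N ≤ n → g • wn k j Δ n ∈ S) → ∀ x ∈ S, g • x ∈ S := by
    intro g hg x hx
    induction hx using Submodule.span_induction with
    | mem x hx => obtain ⟨n, hn, rfl⟩ := hx; exact hg n hn
    | zero => rw [smul_zero]; exact S.zero_mem
    | add x y _ _ hx hy => rw [smul_add]; exact S.add_mem hx hy
    | smul c x _ hx => rw [csmul_comm]; exact S.smul_mem c hx
  let T : Subalgebra ℂ (A k) :=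
  { carrier := {a : A k | ∀ x ∈ S, a • x ∈ S}
    mul_mem' := fun {a b} ha hb x hx => by rw [mul_smul]; exact ha _ (hb _ hx)
    add_mem' := fun {a b} ha hb x hx => by rw [add_smul]; exact S.add_mem (ha x hx) (hb x hx)
    algebraMap_mem' := fun c x hx => by rw [algebraMap_smul]; exact S.smul_mem c hx }
  have hJ : J k ∈ T := hact (J k) (fun n hn => by rw [J_wn]; exact S.smul_mem _ (hwnS n hn))
  have hGp : Gp k ∈ T := hact (Gp k) (fun n hn => by
    rw [Gp_wn]
    rcases Nat.eq_or_lt_of_le hn with h | h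
    · rw [← h, hN, zero_smul]; exact S.zero_mem
    · exact S.smul_mem _ (hwnS _ (Nat.le_sub_one_of_lt h)))
  have hGm : Gm k ∈ T := hact (Gm k) (fun n hn => by
    rw [Gm_wn]; exact hwnS _ (Nat.le_succ_of_le hn))
  have hL : L k ∈ T := hact (L k) (fun n hn => by rw [L_wn]; exact S.smul_mem _ (hwnS n hn))
  have hT : ∀ a : A k, a ∈ T := by
    intro a
    obtain ⟨b, rfl⟩ := RingQuot.mkAlgHom_surjective ℂ (Rel k) a
    show mk k b ∈ T
    induction b using FreeAlgebra.induction with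
    | grade0 c => rw [AlgHom.commutes]; exact T.algebraMap_mem c
    | grade1 i =>
      fin_cases i
      · exact hJ
      · exact hGp
      · exact hGm
      · exact hL
    | mul x y hx hy => rw [map_mul]; exact T.mul_mem hx hy
    | add x y hx hy => rw [map_add]; exact T.add_mem hx hy
  exact hT a x hx

def UA (k j Δ : ℂ) (N : ℕ) (hN : hC k N j Δ = 0) : Submodule (A k) (Verma k j Δ) where
  carrier := Uc k j Δ N
  add_mem' := fun hx hy => (Uc k j Δ N).add_mem hx hy
  zero_mem' := (Uc k j Δ N).zero_mem
  smul_mem' := fun a x hx => Uc_smul_mem k j Δ hN a hx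

lemma mem_UA {N : ℕ} (hN : hC k N j Δ = 0) (x : Verma k j Δ) :
    x ∈ UA k j Δ N hN ↔ x ∈ Uc k j Δ N := Iff.rfl

lemma wn_mem_span_wnN {N m : ℕ} (hm : N ≤ m) :
    wn k j Δ m ∈ Submodule.span (A k) {wn k j Δ N} := by
  have h := Gmpow_wn k j Δ (m - N) N
  rw [Nat.add_sub_cancel' hm] at h
  rw [← h]
  exact Submodule.smul_mem _ _ (Submodule.mem_span_singleton_self _)

lemma span_wnN_eq {N : ℕ} (hN : hC k N j Δ = 0) :
    Submodule.span (A k) {wn k j Δ N} = UA k j Δ N hN := by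
  apply le_antisymm
  · rw [Submodule.span_le, Set.singleton_subset_iff]
    exact Submodule.subset_span ⟨N, le_refl N, rfl⟩
  · intro x hx
    have hle : Uc k j Δ N ≤
        (Submodule.span (A k) {wn k j Δ N}).restrictScalars ℂ := by
      rw [Uc, Submodule.span_le]
      rintro _ ⟨m, hm, rfl⟩
      exact wn_mem_span_wnN k j Δ hm
    exact hle hx

lemma wn0_not_mem_Uc {N : ℕ} (hN1 : 1 ≤ N) : wn k j Δ 0 ∉ Uc k j Δ N := by
  have h0 : (0 : ℕ) ∉ Set.Ici N := by simp; omega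
  exact (wn_li k j Δ).notMem_span_image h0

lemma UA_ne_top {N : ℕ} (hN1 : 1 ≤ N) (hN : hC k N j Δ = 0) :
    UA k j Δ N hN ≠ ⊤ := by
  intro h
  exact wn0_not_mem_Uc k j Δ hN1 (by rw [← mem_UA k j Δ hN, h]; trivial)

lemma UA_ne_bot {N : ℕ} (hN : hC k N j Δ = 0) : UA k j Δ N hN ≠ ⊥ := by
  intro h
  have : wn k j Δ N ∈ UA k j Δ N hN := Submodule.subset_span ⟨N, le_refl N, rfl⟩
  rw [h, Submodule.mem_bot] at this
  exact wn_ne_zero k j Δ N this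

lemma weight_mem (W : Submodule (A k) (Verma k j Δ)) {x : Verma k j Δ} (hx : x ∈ W)
    (m : ℕ) (hm : ((bV k j Δ).repr x) m ≠ 0) : wn k j Δ m ∈ W :=
  weight_mem_aux k j Δ W ((bV k j Δ).repr x).support.card x hx le_rfl m hm

lemma le_UA {N : ℕ} (hN : hC k N j Δ = 0)
    (hmin : ∀ n : ℕ, 1 ≤ n → n < N → hC k n j Δ ≠ 0)
    (W : Submodule (A k) (Verma k j Δ)) (hW : W ≠ ⊤) : W ≤ UA k j Δ N hN := by
  intro x hx
  have hsupp : ∀ m : ℕ, ((bV k j Δ).repr x) m ≠ 0 → N ≤ m := by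
    intro m hm
    by_contra hcon
    push_neg at hcon
    have h1 : wn k j Δ m ∈ W := weight_mem k j Δ W hx m hm
    have h0 : wn k j Δ 0 ∈ W :=
      desc_zero k j Δ W m h1 (fun n h1n h2n => hmin n h1n (lt_of_le_of_lt h2n hcon))
    exact hW (top_of_wn0 k j Δ W h0)
  rw [mem_UA]
  rw [show x = ∑ i ∈ ((bV k j Δ).repr x).support, ((bV k j Δ).repr x) i • wn k j Δ i from
    repr_sum k j Δ x]
  apply Submodule.sum_mem
  intro i hi
  exact (Uc k j Δ N).smul_mem _
    (Submodule.subset_span ⟨i, hsupp i (Finsupp.mem_support_iff.mp hi), rfl⟩)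

-- ### simplicity criterion
lemma repr_ne_zero_of_ne_zero {x : Verma k j Δ} (hx : x ≠ 0) :
    ∃ m : ℕ, ((bV k j Δ).repr x) m ≠ 0 := by
  by_contra h
  push_neg at h
  apply hx
  have : (bV k j Δ).repr x = 0 := Finsupp.ext h
  simpa using congrArg (bV k j Δ).repr.symm this

lemma simple_iff :
    IsSimpleModule (A k) (Verma k j Δ) ↔ ∀ n : ℕ, 1 ≤ n → hC k n j Δ ≠ 0 := by
  constructor
  · intro hs
    by_contra hcon
    push_neg at hcon
    obtain ⟨n, hn1, hn0⟩ := hcon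
    rcases hs.1.2 (UA k j Δ n hn0) with h | h
    · exact UA_ne_bot k j Δ hn0 h
    · exact UA_ne_top k j Δ hn1 hn0 h
  · intro H
    have hnontriv : Nontrivial (Verma k j Δ) := ⟨hwv k j Δ, 0, hwv_ne_zero k j Δ⟩
    haveI : Nontrivial (Submodule (A k) (Verma k j Δ)) := by
      refine ⟨⊥, ⊤, fun h => ?_⟩
      have : hwv k j Δ ∈ (⊥ : Submodule (A k) (Verma k j Δ)) := by rw [h]; trivial
      exact hwv_ne_zero k j Δ (Submodule.mem_bot _ |>.mp this)
    refine (isSimpleModule_iff ..).mpr ⟨fun W => ?_⟩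
    · rcases eq_or_ne W ⊥ with h | h
      · exact Or.inl h
      · right
        obtain ⟨x, hxW, hx0⟩ := Submodule.exists_mem_ne_zero_of_ne_bot h
        obtain ⟨m, hm⟩ := repr_ne_zero_of_ne_zero k j Δ hx0
        have h1 : wn k j Δ m ∈ W := weight_mem k j Δ W hxW m hm
        have h0 : wn k j Δ 0 ∈ W :=
          desc_zero k j Δ W m h1 (fun n hn _ => H n hn)
        exact top_of_wn0 k j Δ W h0

-- ### the isomorphism V_{j-N,Δ} ≅ submodule generated by (G⁻)^N v
lemma Phi_ker {N : ℕ} (hN : hC k N j Δ = 0) :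
    vermaIdeal k (j - N) Δ ≤
      LinearMap.ker (LinearMap.toSpanSingleton (A k) (Verma k j Δ) (wn k j Δ N)) := by
  rw [vermaIdeal, Submodule.span_le]
  intro a ha
  rw [SetLike.mem_coe, LinearMap.mem_ker, LinearMap.toSpanSingleton_apply]
  rcases ha with h | h | h
  · subst h; rw [Gp_wn, hN, zero_smul]
  · rw [h, sub_smul, J_wn, algebraMap_smul, sub_self]
  · rw [Set.mem_singleton_iff] at h
    rw [h, sub_smul, L_wn, algebraMap_smul, sub_self]

def Phi (k j Δ : ℂ) (N : ℕ) (hN : hC k N j Δ = 0) :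
    Verma k (j - N) Δ →ₗ[A k] Verma k j Δ :=
  (vermaIdeal k (j - N) Δ).liftQ
    (LinearMap.toSpanSingleton (A k) (Verma k j Δ) (wn k j Δ N)) (Phi_ker k j Δ hN)

lemma Phi_mk {N : ℕ} (hN : hC k N j Δ = 0) (a : A k) :
    Phi k j Δ N hN (Submodule.Quotient.mk a) = a • wn k j Δ N := by
  rw [Phi, Submodule.liftQ_apply, LinearMap.toSpanSingleton_apply]

lemma Phi_wn {N : ℕ} (hN : hC k N j Δ = 0) (m : ℕ) :
    Phi k j Δ N hN (wn k (j - N) Δ m) = wn k j Δ (N + m) := by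
  rw [wn, smul_hwv, Phi_mk k j Δ hN, Gmpow_wn]

lemma Phi_csmul {N : ℕ} (hN : hC k N j Δ = 0) (c : ℂ) (x : Verma k (j - N) Δ) :
    Phi k j Δ N hN (c • x) = c • Phi k j Δ N hN x := by
  rw [← algebraMap_smul (A k) c x, map_smul, algebraMap_smul]

lemma Phi_inj {N : ℕ} (hN : hC k N j Δ = 0) :
    Function.Injective (Phi k j Δ N hN) := by
  rw [← LinearMap.ker_eq_bot, Submodule.eq_bot_iff]
  intro x hx
  rw [LinearMap.mem_ker] at hx
  have hx' : ∑ i ∈ ((bV k (j - N) Δ).repr x).support,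
      ((bV k (j - N) Δ).repr x) i • wn k j Δ (N + i) = 0 := by
    calc ∑ i ∈ ((bV k (j - N) Δ).repr x).support,
          ((bV k (j - N) Δ).repr x) i • wn k j Δ (N + i)
        = Phi k j Δ N hN (∑ i ∈ ((bV k (j - N) Δ).repr x).support,
            ((bV k (j - N) Δ).repr x) i • wn k (j - N) Δ i) := by
          rw [map_sum]
          exact Finset.sum_congr rfl fun i _ => by
            rw [Phi_csmul k j Δ hN, Phi_wn k j Δ hN]
      _ = Phi k j Δ N hN x := by rw [← repr_sum]
      _ = 0 := hx
  have hli : LinearIndependent ℂ (fun i : ℕ => wn k j Δ (N + i)) :=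
    (wn_li k j Δ).comp (fun i => N + i) (fun a b h => Nat.add_left_cancel h)
  have hz : ∀ i ∈ ((bV k (j - N) Δ).repr x).support, ((bV k (j - N) Δ).repr x) i = 0 :=
    linearIndependent_iff'.mp hli _ _ hx'
  have : (bV k (j - N) Δ).repr x = 0 := by
    apply Finsupp.ext; intro i
    by_cases hi : i ∈ ((bV k (j - N) Δ).repr x).support
    · exact hz i hi
    · exact Finsupp.notMem_support_iff.mp hi
  simpa using congrArg (bV k (j - N) Δ).repr.symm this

lemma Phi_range {N : ℕ} (hN : hC k N j Δ = 0) :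
    LinearMap.range (Phi k j Δ N hN) = Submodule.span (A k) {wn k j Δ N} := by
  rw [Phi, Submodule.range_liftQ, LinearMap.span_singleton_eq_range]

def PhiEquiv (k j Δ : ℂ) (N : ℕ) (hN : hC k N j Δ = 0) :
    (Submodule.span (A k) {wn k j Δ N} : Submodule (A k) (Verma k j Δ))
      ≃ₗ[A k] Verma k (j - N) Δ :=
  ((LinearEquiv.ofEq _ _ (Phi_range k j Δ hN).symm).trans
    (LinearEquiv.ofInjective (Phi k j Δ N hN) (Phi_inj k j Δ hN)).symm)

-- ### rank of the simple quotient
section rank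
variable {N : ℕ} (hN : hC k N j Δ = 0)

lemma mkQ_csmul (p : Submodule (A k) (Verma k j Δ)) (c : ℂ) (y : Verma k j Δ) :
    p.mkQ (c • y) = c • p.mkQ y := by
  rw [← algebraMap_smul (A k) c y, map_smul, algebraMap_smul]

def qB (k j Δ : ℂ) (N : ℕ) : Fin N → Verma k j Δ ⧸ Submodule.span (A k) {wn k j Δ N} :=
  fun i => (Submodule.span (A k) {wn k j Δ N}).mkQ (wn k j Δ i)

lemma qB_span :
    Submodule.span ℂ (Set.range (qB k j Δ N)) = ⊤ := by
  rw [eq_top_iff]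
  rintro z -
  obtain ⟨y, rfl⟩ := Submodule.mkQ_surjective _ z
  have hy := top_le_span k j Δ y
  induction hy using Submodule.span_induction with
  | mem y hy =>
    obtain ⟨m, rfl⟩ := hy
    by_cases hm : m < N
    · exact Submodule.subset_span ⟨⟨m, hm⟩, rfl⟩
    · push_neg at hm
      have : (Submodule.span (A k) {wn k j Δ N}).mkQ (wn k j Δ m) = 0 := by
        rw [Submodule.mkQ_apply, Submodule.Quotient.mk_eq_zero]
        exact wn_mem_span_wnN k j Δ hm
      rw [this]
      exact Submodule.zero_mem _
  | zero => rw [map_zero]; exact Submodule.zero_mem _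
  | add y1 y2 _ _ h1 h2 => rw [map_add]; exact Submodule.add_mem _ h1 h2
  | smul c y _ h => rw [mkQ_csmul]; exact Submodule.smul_mem _ c h

lemma qB_li (hN : hC k N j Δ = 0) : LinearIndependent ℂ (qB k j Δ N) := by
  rw [Fintype.linearIndependent_iff]
  intro c hc
  set y : Verma k j Δ := ∑ i : Fin N, c i • wn k j Δ i with hy
  have hyU : y ∈ Uc k j Δ N := by
    have h1 : (Submodule.span (A k) {wn k j Δ N}).mkQ y = 0 := by
      rw [hy, map_sum, ← hc]
      exact Finset.sum_congr rfl fun i _ => by rw [mkQ_csmul]; rfl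
    rw [Submodule.mkQ_apply, Submodule.Quotient.mk_eq_zero, span_wnN_eq k j Δ hN] at h1
    exact h1
  have hyI : y ∈ Submodule.span ℂ (wn k j Δ '' Set.Iio N) := by
    rw [hy]
    apply Submodule.sum_mem
    intro i _
    exact Submodule.smul_mem _ _ (Submodule.subset_span ⟨i, i.isLt, rfl⟩)
  have hdisj : Disjoint (Submodule.span ℂ (wn k j Δ '' Set.Iio N))
      (Submodule.span ℂ (wn k j Δ '' Set.Ici N)) :=
    (wn_li k j Δ).disjoint_span_image (by simp [Set.disjoint_left])
  have hy0 : y = 0 := by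
    have := hdisj.le_bot ⟨hyI, hyU⟩
    simpa using this
  -- conclude coefficients vanish
  have hli : LinearIndependent ℂ (fun i : ℕ => wn k j Δ i) := wn_li k j Δ
  have hz : ∀ i ∈ Finset.range N, (fun m => if h : m < N then c ⟨m, h⟩ else 0) i = 0 := by
    apply linearIndependent_iff'.mp hli (Finset.range N)
    rw [← hy0, hy]
    rw [← Fin.sum_univ_eq_sum_range (fun m => (if h : m < N then c ⟨m, h⟩ else 0) • wn k j Δ m) N]
    exact Finset.sum_congr rfl fun i _ => by simp
  intro i
  have := hz i (Finset.mem_range.mpr i.isLt)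
  simpa [i.isLt] using this

end rank

lemma rank_quot {N : ℕ} (hN : hC k N j Δ = 0) :
    Module.rank ℂ (Verma k j Δ ⧸ Submodule.span (A k) {wn k j Δ N}) = N := by
  have b : Module.Basis (Fin N) ℂ (Verma k j Δ ⧸ Submodule.span (A k) {wn k j Δ N}) :=
    Module.Basis.mk (qB_li k j Δ hN) (fun x _ => by rw [qB_span k j Δ]; trivial)
  rw [rank_eq_card_basis b, Fintype.card_fin]

lemma rankOverC_bridge (p : Submodule (A k) (Verma k j Δ)) :
    rankOverC k (Verma k j Δ ⧸ p) = Module.rank ℂ (Verma k j Δ ⧸ p) := by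
  have he : (Module.compHom (Verma k j Δ ⧸ p) (algebraMap ℂ (A k)) : Module ℂ _)
      = (inferInstance : Module ℂ (Verma k j Δ ⧸ p)) :=
    Module.ext' _ _ fun c x =>
      (algebraMap_smul (A k) c x : algebraMap ℂ (A k) c • x = c • x)
  unfold rankOverC
  rw [he]

theorem verma_simplicity' (k j Δ : ℂ) :
    (IsSimpleModule (A k) (Verma k j Δ) ↔ ∀ n : ℕ, 1 ≤ n → hC k n j Δ ≠ 0) ∧
    (∀ N : ℕ, 1 ≤ N → hC k N j Δ = 0 → (∀ n : ℕ, 1 ≤ n → n < N → hC k n j Δ ≠ 0) →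
      Nonempty
        ((Submodule.span (A k) {Gm k ^ N • hwv k j Δ} : Submodule (A k) (Verma k j Δ))
          ≃ₗ[A k] Verma k (j - N) Δ) ∧
      (Submodule.span (A k) {Gm k ^ N • hwv k j Δ} : Submodule (A k) (Verma k j Δ)) ≠ ⊤ ∧
      (∀ W : Submodule (A k) (Verma k j Δ), W ≠ ⊤ →
        W ≤ Submodule.span (A k) {Gm k ^ N • hwv k j Δ}) ∧
      rankOverC k (Verma k j Δ ⧸
        (Submodule.span (A k) {Gm k ^ N • hwv k j Δ} : Submodule (A k) (Verma k j Δ))) = N) := by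
  constructor
  · exact simple_iff k j Δ
  · intro N hN1 hN hmin
    have hwnN : (Gm k ^ N • hwv k j Δ) = wn k j Δ N := rfl
    rw [hwnN]
    refine ⟨⟨PhiEquiv k j Δ N hN⟩, ?_, ?_, ?_⟩
    · rw [span_wnN_eq k j Δ hN]; exact UA_ne_top k j Δ hN1 hN
    · intro W hW
      rw [span_wnN_eq k j Δ hN]
      exact le_UA k j Δ hN hmin W hW
    · rw [rankOverC_bridge, rank_quot k j Δ hN]

/-- the Verma module `V_{j,Δ}` is simple iff `h_k^n(j,Δ) ≠ 0` for all
integers `n ≥ 1`; and if `N ≥ 1` is minimal with `h_k^N(j,Δ) = 0`, then the submodule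
generated by `(G⁻)^N v` is isomorphic to `V_{j−N,Δ}`, it is the unique maximal proper
submodule, and the simple quotient `L_{j,Δ}` has dimension `N` over `ℂ`. -/
theorem verma_simplicity (k j Δ : ℂ) :
    (IsSimpleModule (A k) (Verma k j Δ) ↔ ∀ n : ℕ, 1 ≤ n → hC k n j Δ ≠ 0) ∧
    (∀ N : ℕ, 1 ≤ N → hC k N j Δ = 0 → (∀ n : ℕ, 1 ≤ n → n < N → hC k n j Δ ≠ 0) →
      Nonempty
        ((Submodule.span (A k) {Gm k ^ N • hwv k j Δ} : Submodule (A k) (Verma k j Δ))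
          ≃ₗ[A k] Verma k (j - N) Δ) ∧
      (Submodule.span (A k) {Gm k ^ N • hwv k j Δ} : Submodule (A k) (Verma k j Δ)) ≠ ⊤ ∧
      (∀ W : Submodule (A k) (Verma k j Δ), W ≠ ⊤ →
        W ≤ Submodule.span (A k) {Gm k ^ N • hwv k j Δ}) ∧
      rankOverC k (Verma k j Δ ⧸
        (Submodule.span (A k) {Gm k ^ N • hwv k j Δ} : Submodule (A k) (Verma k j Δ))) = N) := by
  exact verma_simplicity' k j Δ

end BP
end
end

section
/- There exists a unique ℂ-algebra automorphism σ of A_k satisfying σ(J) = −J, σ(G⁺) = G⁻, σ(G⁻) = −G⁺ and σ(L) = L. Moreover, the element Ω = G⁺G⁻ + G⁻G⁺ + 2J³ + J − 2J((k+3)L + (1/8)(k+1)(2k+3)·1) is central in A_k and satisfies σ(Ω) = −Ω. -/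
noncomputable section

namespace BP

/-- The central element `Ω = G⁺G⁻ + G⁻G⁺ + 2J³ + J − 2J((k+3)L + (1/8)(k+1)(2k+3)·1)`. -/
def Omega (k : ℂ) : A k :=
  Gp k * Gm k + Gm k * Gp k + 2 * J k ^ 3 + J k
    - 2 * J k * (algebraMap ℂ (A k) (k + 3) * L k
        + algebraMap ℂ (A k) (1/8 * (k + 1) * (2*k + 3)))

-- AUX START
def u (k : ℂ) : A k :=
  algebraMap ℂ (A k) (k + 3) * L k + algebraMap ℂ (A k) (1/8 * (k + 1) * (2*k + 3))

lemma Omega_def (k : ℂ) :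
    Omega k = Gp k * Gm k + Gm k * Gp k + 2 * J k ^ 3 + J k - 2 * J k * u k := rfl

lemma hlj (k : ℂ) : L k * J k = J k * L k := by
  have h := RingQuot.mkAlgHom_rel ℂ (Rel.lj (k := k))
  rw [map_mul, map_mul] at h; exact h

lemma hlp (k : ℂ) : L k * Gp k = Gp k * L k := by
  have h := RingQuot.mkAlgHom_rel ℂ (Rel.lgp (k := k))
  rw [map_mul, map_mul] at h; exact h

lemma hlm (k : ℂ) : L k * Gm k = Gm k * L k := by
  have h := RingQuot.mkAlgHom_rel ℂ (Rel.lgm (k := k))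
  rw [map_mul, map_mul] at h; exact h

lemma hjp (k : ℂ) : J k * Gp k = Gp k * J k + Gp k := by
  have h := RingQuot.mkAlgHom_rel ℂ (Rel.jgp (k := k))
  rw [map_sub, map_mul, map_mul] at h
  exact sub_eq_iff_eq_add'.mp h

lemma hjm (k : ℂ) : J k * Gm k = Gm k * J k - Gm k := by
  have h := RingQuot.mkAlgHom_rel ℂ (Rel.jgm (k := k))
  rw [map_sub, map_mul, map_mul, map_neg] at h
  have h2 := sub_eq_iff_eq_add'.mp h
  rw [← sub_eq_add_neg] at h2
  exact h2

lemma mk_alg (k : ℂ) (c : ℂ) : mk k (algebraMap ℂ F c) = algebraMap ℂ (A k) c :=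
  (mk k).commutes c

lemma mk_fF (k : ℂ) : mk k (fF k) = 3 * J k ^ 2 - u k := by
  have h : fF k = 3 * jF ^ 2
      - (algebraMap ℂ F (k + 3) * lF + algebraMap ℂ F (1/8 * (k + 1) * (2*k + 3))) := by
    unfold fF; abel
  rw [h, map_sub, map_add, map_mul, map_mul, map_pow, map_ofNat, mk_alg, mk_alg]
  rfl

lemma hpm (k : ℂ) : Gp k * Gm k = Gm k * Gp k + (3 * J k ^ 2 - u k) := by
  have h := RingQuot.mkAlgHom_rel ℂ (Rel.gpgm (k := k))
  rw [map_sub, map_mul, map_mul] at h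
  calc Gp k * Gm k = Gm k * Gp k + mk k (fF k) := sub_eq_iff_eq_add'.mp h
    _ = Gm k * Gp k + (3 * J k ^ 2 - u k) := by rw [mk_fF]



lemma fF_eq (k : ℂ) : fF k = 3 * jF ^ 2
    - (algebraMap ℂ F (k + 3) * lF + algebraMap ℂ F (1/8 * (k + 1) * (2*k + 3))) := by
  unfold fF; abel

lemma hpj (k : ℂ) : Gp k * J k = J k * Gp k - Gp k := by rw [hjp]; abel

lemma hmj (k : ℂ) : Gm k * J k = J k * Gm k + Gm k := by rw [hjm]; abel

lemma huj (k : ℂ) : u k * J k = J k * u k := by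
  have h1 : algebraMap ℂ (A k) (k+3) * L k * J k
      = J k * (algebraMap ℂ (A k) (k+3) * L k) := by
    rw [mul_assoc, hlj, ← mul_assoc, Algebra.commutes, mul_assoc]
  have h2 := Algebra.commutes (1/8 * (k + 1) * (2*k + 3)) (J k)
  unfold u
  rw [add_mul, h1, h2, ← mul_add]

lemma hup (k : ℂ) : u k * Gp k = Gp k * u k := by
  have h1 : algebraMap ℂ (A k) (k+3) * L k * Gp k
      = Gp k * (algebraMap ℂ (A k) (k+3) * L k) := by
    rw [mul_assoc, hlp, ← mul_assoc, Algebra.commutes, mul_assoc]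
  have h2 := Algebra.commutes (1/8 * (k + 1) * (2*k + 3)) (Gp k)
  unfold u
  rw [add_mul, h1, h2, ← mul_add]

lemma mkq_alg (k : ℂ) (c : ℂ) :
    RingQuot.mkAlgHom ℂ (Rel k) (algebraMap ℂ F c) = algebraMap ℂ (A k) c :=
  (RingQuot.mkAlgHom ℂ (Rel k)).commutes c

/-- Anything commuting with the four generators is central. -/
lemma central_of (k : ℂ) (z : A k)
    (hj : z * J k = J k * z) (hp : z * Gp k = Gp k * z)
    (hm : z * Gm k = Gm k * z) (hl : z * L k = L k * z) :
    ∀ x : A k, z * x = x * z := by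
  intro x
  obtain ⟨y, rfl⟩ := RingQuot.mkAlgHom_surjective ℂ (Rel k) x
  induction y using FreeAlgebra.induction with
  | grade0 r => rw [mkq_alg]; exact (Algebra.commutes r z).symm
  | grade1 i =>
    fin_cases i
    · exact hj
    · exact hp
    · exact hm
    · exact hl
  | mul a b ha hb =>
    change z * mk k a = mk k a * z at ha
    change z * mk k b = mk k b * z at hb
    change z * mk k (a * b) = mk k (a * b) * z
    rw [map_mul, ← mul_assoc, ha, mul_assoc, hb, ← mul_assoc]
  | add a b ha hb =>
    change z * mk k a = mk k a * z at ha
    change z * mk k b = mk k b * z at hb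
    change z * mk k (a + b) = mk k (a + b) * z
    rw [map_add, mul_add, add_mul, ha, hb]

lemma l_central (k : ℂ) : ∀ x : A k, L k * x = x * L k :=
  central_of k (L k) (hlj k) (hlp k) (hlm k) rfl

/-- Extensionality for algebra maps out of `A k`. -/
lemma algHom_ext {k : ℂ} {B : Type} [Semiring B] [Algebra ℂ B] {f g : A k →ₐ[ℂ] B}
    (hJ : f (J k) = g (J k)) (hGp : f (Gp k) = g (Gp k))
    (hGm : f (Gm k) = g (Gm k)) (hL : f (L k) = g (L k)) : f = g := by
  apply RingQuot.ringQuot_ext'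
  apply FreeAlgebra.hom_ext
  funext i
  fin_cases i
  · exact hJ
  · exact hGp
  · exact hGm
  · exact hL

/-! ### The maps σ and τ -/

def sigmaF (k : ℂ) : F →ₐ[ℂ] A k := FreeAlgebra.lift ℂ ![-J k, Gm k, -Gp k, L k]
def tauF (k : ℂ) : F →ₐ[ℂ] A k := FreeAlgebra.lift ℂ ![-J k, -Gm k, Gp k, L k]

lemma sigmaF_j (k : ℂ) : sigmaF k jF = -J k := by simp [sigmaF, jF]
lemma sigmaF_gp (k : ℂ) : sigmaF k gpF = Gm k := by simp [sigmaF, gpF]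
lemma sigmaF_gm (k : ℂ) : sigmaF k gmF = -Gp k := by simp [sigmaF, gmF]
lemma sigmaF_l (k : ℂ) : sigmaF k lF = L k := by simp [sigmaF, lF]
lemma tauF_j (k : ℂ) : tauF k jF = -J k := by simp [tauF, jF]
lemma tauF_gp (k : ℂ) : tauF k gpF = -Gm k := by simp [tauF, gpF]
lemma tauF_gm (k : ℂ) : tauF k gmF = Gp k := by simp [tauF, gmF]
lemma tauF_l (k : ℂ) : tauF k lF = L k := by simp [tauF, lF]

lemma sigmaF_fF (k : ℂ) : sigmaF k (fF k) = 3 * J k ^ 2 - u k := by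
  rw [fF_eq, map_sub, map_add, map_mul, map_mul, map_pow, map_ofNat,
    (sigmaF k).commutes, (sigmaF k).commutes, sigmaF_j, sigmaF_l, neg_sq]
  rfl

lemma tauF_fF (k : ℂ) : tauF k (fF k) = 3 * J k ^ 2 - u k := by
  rw [fF_eq, map_sub, map_add, map_mul, map_mul, map_pow, map_ofNat,
    (tauF k).commutes, (tauF k).commutes, tauF_j, tauF_l, neg_sq]
  rfl

lemma sigmaF_rel (k : ℂ) : ∀ ⦃x y⦄, Rel k x y → sigmaF k x = sigmaF k y := by
  intro x y h
  cases h with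
  | lj =>
    rw [map_mul, map_mul, sigmaF_j, sigmaF_l, mul_neg, neg_mul, hlj]
  | lgp =>
    rw [map_mul, map_mul, sigmaF_gp, sigmaF_l, hlm]
  | lgm =>
    rw [map_mul, map_mul, sigmaF_gm, sigmaF_l, mul_neg, neg_mul, hlp]
  | jgp =>
    rw [map_sub, map_mul, map_mul, sigmaF_j, sigmaF_gp]
    calc -J k * Gm k - Gm k * -J k = -(J k * Gm k) + Gm k * J k := by noncomm_ring
      _ = -(Gm k * J k - Gm k) + Gm k * J k := by rw [hjm]
      _ = Gm k := by abel
  | jgm =>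
    rw [map_sub, map_mul, map_mul, map_neg, sigmaF_j, sigmaF_gm]
    calc -J k * -Gp k - -Gp k * -J k = J k * Gp k - Gp k * J k := by noncomm_ring
      _ = (Gp k * J k + Gp k) - Gp k * J k := by rw [hjp]
      _ = - -Gp k := by abel
  | gpgm =>
    rw [map_sub, map_mul, map_mul, sigmaF_gp, sigmaF_gm, sigmaF_fF]
    calc Gm k * -Gp k - -Gp k * Gm k = Gp k * Gm k - Gm k * Gp k := by noncomm_ring
      _ = (Gm k * Gp k + (3 * J k ^ 2 - u k)) - Gm k * Gp k := by rw [hpm]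
      _ = 3 * J k ^ 2 - u k := by abel

lemma tauF_rel (k : ℂ) : ∀ ⦃x y⦄, Rel k x y → tauF k x = tauF k y := by
  intro x y h
  cases h with
  | lj =>
    rw [map_mul, map_mul, tauF_j, tauF_l, mul_neg, neg_mul, hlj]
  | lgp =>
    rw [map_mul, map_mul, tauF_gp, tauF_l, mul_neg, neg_mul, hlm]
  | lgm =>
    rw [map_mul, map_mul, tauF_gm, tauF_l, hlp]
  | jgp =>
    rw [map_sub, map_mul, map_mul, tauF_j, tauF_gp]
    calc -J k * -Gm k - -Gm k * -J k = J k * Gm k - Gm k * J k := by noncomm_ring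
      _ = (Gm k * J k - Gm k) - Gm k * J k := by rw [hjm]
      _ = -Gm k := by abel
  | jgm =>
    rw [map_sub, map_mul, map_mul, map_neg, tauF_j, tauF_gm]
    calc -J k * Gp k - Gp k * -J k = -(J k * Gp k) + Gp k * J k := by noncomm_ring
      _ = -(Gp k * J k + Gp k) + Gp k * J k := by rw [hjp]
      _ = -Gp k := by abel
  | gpgm =>
    rw [map_sub, map_mul, map_mul, tauF_gp, tauF_gm, tauF_fF]
    calc -Gm k * Gp k - Gp k * -Gm k = Gp k * Gm k - Gm k * Gp k := by noncomm_ring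
      _ = (Gm k * Gp k + (3 * J k ^ 2 - u k)) - Gm k * Gp k := by rw [hpm]
      _ = 3 * J k ^ 2 - u k := by abel

def sigmaA (k : ℂ) : A k →ₐ[ℂ] A k := RingQuot.liftAlgHom ℂ ⟨sigmaF k, sigmaF_rel k⟩
def tauA (k : ℂ) : A k →ₐ[ℂ] A k := RingQuot.liftAlgHom ℂ ⟨tauF k, tauF_rel k⟩

lemma sigmaA_J (k : ℂ) : sigmaA k (J k) = -J k :=
  (RingQuot.liftAlgHom_mkAlgHom_apply ℂ (sigmaF k) (sigmaF_rel k) jF).trans (sigmaF_j k)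
lemma sigmaA_Gp (k : ℂ) : sigmaA k (Gp k) = Gm k :=
  (RingQuot.liftAlgHom_mkAlgHom_apply ℂ (sigmaF k) (sigmaF_rel k) gpF).trans (sigmaF_gp k)
lemma sigmaA_Gm (k : ℂ) : sigmaA k (Gm k) = -Gp k :=
  (RingQuot.liftAlgHom_mkAlgHom_apply ℂ (sigmaF k) (sigmaF_rel k) gmF).trans (sigmaF_gm k)
lemma sigmaA_L (k : ℂ) : sigmaA k (L k) = L k :=
  (RingQuot.liftAlgHom_mkAlgHom_apply ℂ (sigmaF k) (sigmaF_rel k) lF).trans (sigmaF_l k)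
lemma tauA_J (k : ℂ) : tauA k (J k) = -J k :=
  (RingQuot.liftAlgHom_mkAlgHom_apply ℂ (tauF k) (tauF_rel k) jF).trans (tauF_j k)
lemma tauA_Gp (k : ℂ) : tauA k (Gp k) = -Gm k :=
  (RingQuot.liftAlgHom_mkAlgHom_apply ℂ (tauF k) (tauF_rel k) gpF).trans (tauF_gp k)
lemma tauA_Gm (k : ℂ) : tauA k (Gm k) = Gp k :=
  (RingQuot.liftAlgHom_mkAlgHom_apply ℂ (tauF k) (tauF_rel k) gmF).trans (tauF_gm k)
lemma tauA_L (k : ℂ) : tauA k (L k) = L k :=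
  (RingQuot.liftAlgHom_mkAlgHom_apply ℂ (tauF k) (tauF_rel k) lF).trans (tauF_l k)

lemma sigma_tau (k : ℂ) : (sigmaA k).comp (tauA k) = AlgHom.id ℂ (A k) := by
  apply algHom_ext
  · show sigmaA k (tauA k (J k)) = J k
    rw [tauA_J, map_neg, sigmaA_J, neg_neg]
  · show sigmaA k (tauA k (Gp k)) = Gp k
    rw [tauA_Gp, map_neg, sigmaA_Gm, neg_neg]
  · show sigmaA k (tauA k (Gm k)) = Gm k
    rw [tauA_Gm, sigmaA_Gp]
  · show sigmaA k (tauA k (L k)) = L k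
    rw [tauA_L, sigmaA_L]

lemma tau_sigma (k : ℂ) : (tauA k).comp (sigmaA k) = AlgHom.id ℂ (A k) := by
  apply algHom_ext
  · show tauA k (sigmaA k (J k)) = J k
    rw [sigmaA_J, map_neg, tauA_J, neg_neg]
  · show tauA k (sigmaA k (Gp k)) = Gp k
    rw [sigmaA_Gp, tauA_Gm]
  · show tauA k (sigmaA k (Gm k)) = Gm k
    rw [sigmaA_Gm, map_neg, tauA_Gp, neg_neg]
  · show tauA k (sigmaA k (L k)) = L k
    rw [sigmaA_L, tauA_L]

def sigmaE (k : ℂ) : A k ≃ₐ[ℂ] A k :=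
  AlgEquiv.ofAlgHom (sigmaA k) (tauA k) (sigma_tau k) (tau_sigma k)

lemma sigmaE_J (k : ℂ) : sigmaE k (J k) = -J k := sigmaA_J k
lemma sigmaE_Gp (k : ℂ) : sigmaE k (Gp k) = Gm k := sigmaA_Gp k
lemma sigmaE_Gm (k : ℂ) : sigmaE k (Gm k) = -Gp k := sigmaA_Gm k
lemma sigmaE_L (k : ℂ) : sigmaE k (L k) = L k := sigmaA_L k

/-- Any automorphism with the right values on generators sends `Ω` to `-Ω`. -/
lemma sigma_omega (k : ℂ) : ∀ σ : A k ≃ₐ[ℂ] A k,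
    σ (J k) = -J k → σ (Gp k) = Gm k → σ (Gm k) = -Gp k → σ (L k) = L k →
    σ (Omega k) = -Omega k := by
  intro σ hJ hp hm hl
  simp only [Omega, map_sub, map_add, map_mul, map_pow, map_ofNat,
    AlgEquiv.commutes, hJ, hp, hm, hl]
  noncomm_ring

/-! ### Ω commutes with the generators -/

lemma hj2p (k : ℂ) : J k ^ 2 * Gp k = Gp k * J k ^ 2 + 2 * (Gp k * J k) + Gp k := by
  calc J k ^ 2 * Gp k = J k * (J k * Gp k) := by noncomm_ring
    _ = J k * (Gp k * J k + Gp k) := by rw [hjp]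
    _ = J k * (Gp k * J k) + J k * Gp k := by rw [mul_add]
    _ = (J k * Gp k) * J k + J k * Gp k := by rw [← mul_assoc]
    _ = (Gp k * J k + Gp k) * J k + (Gp k * J k + Gp k) := by rw [hjp]
    _ = Gp k * J k ^ 2 + 2 * (Gp k * J k) + Gp k := by noncomm_ring

lemma hj3p (k : ℂ) : J k ^ 3 * Gp k
    = Gp k * J k ^ 3 + 3 * (Gp k * J k ^ 2) + 3 * (Gp k * J k) + Gp k := by
  calc J k ^ 3 * Gp k = J k * (J k ^ 2 * Gp k) := by noncomm_ring
    _ = J k * (Gp k * J k ^ 2 + 2 * (Gp k * J k) + Gp k) := by rw [hj2p]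
    _ = (J k * Gp k) * J k ^ 2 + 2 * ((J k * Gp k) * J k) + J k * Gp k := by noncomm_ring
    _ = (Gp k * J k + Gp k) * J k ^ 2 + 2 * ((Gp k * J k + Gp k) * J k)
          + (Gp k * J k + Gp k) := by rw [hjp]
    _ = Gp k * J k ^ 3 + 3 * (Gp k * J k ^ 2) + 3 * (Gp k * J k) + Gp k := by noncomm_ring

lemma hfp (k : ℂ) : (3 * J k ^ 2 - u k) * Gp k
    = 3 * (Gp k * J k ^ 2) + 6 * (Gp k * J k) + 3 * Gp k - Gp k * u k := by
  calc (3 * J k ^ 2 - u k) * Gp k = 3 * (J k ^ 2 * Gp k) - u k * Gp k := by noncomm_ring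
    _ = 3 * (Gp k * J k ^ 2 + 2 * (Gp k * J k) + Gp k) - Gp k * u k := by rw [hj2p, hup]
    _ = 3 * (Gp k * J k ^ 2) + 6 * (Gp k * J k) + 3 * Gp k - Gp k * u k := by noncomm_ring

lemma hp2m (k : ℂ) : Gp k ^ 2 * Gm k
    = Gm k * Gp k ^ 2 + (3 * J k ^ 2 - u k) * Gp k + Gp k * (3 * J k ^ 2 - u k) := by
  calc Gp k ^ 2 * Gm k = Gp k * (Gp k * Gm k) := by noncomm_ring
    _ = Gp k * (Gm k * Gp k + (3 * J k ^ 2 - u k)) := by rw [hpm]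
    _ = (Gp k * Gm k) * Gp k + Gp k * (3 * J k ^ 2 - u k) := by noncomm_ring
    _ = (Gm k * Gp k + (3 * J k ^ 2 - u k)) * Gp k + Gp k * (3 * J k ^ 2 - u k) := by rw [hpm]
    _ = Gm k * Gp k ^ 2 + (3 * J k ^ 2 - u k) * Gp k + Gp k * (3 * J k ^ 2 - u k) := by
        noncomm_ring

lemma omega_comm_p (k : ℂ) : Omega k * Gp k = Gp k * Omega k := by
  have e4 : J k * (Gp k * u k) = (Gp k * J k + Gp k) * u k := by rw [← mul_assoc, hjp]
  have e7 : Gp k * (3 * J k ^ 2 - u k) = 3 * (Gp k * J k ^ 2) - Gp k * u k := by noncomm_ring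
  have hL : Omega k * Gp k
      = Gm k * Gp k ^ 2 + Gp k * (Gm k * Gp k) + 2 * (Gp k * J k ^ 3)
        + 6 * (Gp k * J k ^ 2) + 7 * (Gp k * J k) + 3 * Gp k
        - 2 * (Gp k * u k) - 2 * (Gp k * J k * u k) := by
    calc Omega k * Gp k
        = Gp k * (Gm k * Gp k) + Gm k * Gp k ^ 2 + 2 * (J k ^ 3 * Gp k) + J k * Gp k
            - 2 * (J k * (u k * Gp k)) := by rw [Omega_def]; noncomm_ring
      _ = Gp k * (Gm k * Gp k) + Gm k * Gp k ^ 2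
            + 2 * (Gp k * J k ^ 3 + 3 * (Gp k * J k ^ 2) + 3 * (Gp k * J k) + Gp k)
            + (Gp k * J k + Gp k) - 2 * (J k * (Gp k * u k)) := by rw [hj3p, hjp, hup]
      _ = Gp k * (Gm k * Gp k) + Gm k * Gp k ^ 2
            + 2 * (Gp k * J k ^ 3 + 3 * (Gp k * J k ^ 2) + 3 * (Gp k * J k) + Gp k)
            + (Gp k * J k + Gp k) - 2 * ((Gp k * J k + Gp k) * u k) := by rw [e4]
      _ = _ := by noncomm_ring
  have hR : Gp k * Omega k
      = Gm k * Gp k ^ 2 + Gp k * (Gm k * Gp k) + 2 * (Gp k * J k ^ 3)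
        + 6 * (Gp k * J k ^ 2) + 7 * (Gp k * J k) + 3 * Gp k
        - 2 * (Gp k * u k) - 2 * (Gp k * J k * u k) := by
    calc Gp k * Omega k
        = Gp k ^ 2 * Gm k + Gp k * (Gm k * Gp k) + 2 * (Gp k * J k ^ 3) + Gp k * J k
            - 2 * (Gp k * J k * u k) := by rw [Omega_def]; noncomm_ring
      _ = (Gm k * Gp k ^ 2 + (3 * J k ^ 2 - u k) * Gp k + Gp k * (3 * J k ^ 2 - u k))
            + Gp k * (Gm k * Gp k) + 2 * (Gp k * J k ^ 3) + Gp k * J k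
            - 2 * (Gp k * J k * u k) := by rw [hp2m]
      _ = (Gm k * Gp k ^ 2 + (3 * (Gp k * J k ^ 2) + 6 * (Gp k * J k) + 3 * Gp k
              - Gp k * u k) + (3 * (Gp k * J k ^ 2) - Gp k * u k))
            + Gp k * (Gm k * Gp k) + 2 * (Gp k * J k ^ 3) + Gp k * J k
            - 2 * (Gp k * J k * u k) := by rw [hfp, e7]
      _ = _ := by noncomm_ring
  rw [hL, hR]

lemma omega_comm_j (k : ℂ) : Omega k * J k = J k * Omega k := by
  have Hpmj : (Gp k * Gm k) * J k = J k * (Gp k * Gm k) := by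
    calc (Gp k * Gm k) * J k = Gp k * (Gm k * J k) := by rw [mul_assoc]
      _ = Gp k * (J k * Gm k) + Gp k * Gm k := by rw [hmj, mul_add]
      _ = (Gp k * J k) * Gm k + Gp k * Gm k := by rw [← mul_assoc]
      _ = (J k * Gp k - Gp k) * Gm k + Gp k * Gm k := by rw [hpj]
      _ = J k * (Gp k * Gm k) := by noncomm_ring
  have Hmpj : (Gm k * Gp k) * J k = J k * (Gm k * Gp k) := by
    calc (Gm k * Gp k) * J k = Gm k * (Gp k * J k) := by rw [mul_assoc]
      _ = Gm k * (J k * Gp k) - Gm k * Gp k := by rw [hpj, mul_sub]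
      _ = (Gm k * J k) * Gp k - Gm k * Gp k := by rw [← mul_assoc]
      _ = (J k * Gm k + Gm k) * Gp k - Gm k * Gp k := by rw [hmj]
      _ = J k * (Gm k * Gp k) := by noncomm_ring
  have Hjuj : (J k * u k) * J k = J k * (J k * u k) := by rw [mul_assoc, huj]
  calc Omega k * J k
      = (Gp k * Gm k) * J k + (Gm k * Gp k) * J k + 2 * (J k ^ 3 * J k) + J k * J k
          - 2 * ((J k * u k) * J k) := by rw [Omega_def]; noncomm_ring
    _ = J k * (Gp k * Gm k) + J k * (Gm k * Gp k) + 2 * (J k ^ 3 * J k) + J k * J k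
          - 2 * (J k * (J k * u k)) := by rw [Hpmj, Hmpj, Hjuj]
    _ = J k * Omega k := by rw [Omega_def]; noncomm_ring

lemma omega_comm_m (k : ℂ) : Omega k * Gm k = Gm k * Omega k := by
  have h := congrArg (sigmaE k) (omega_comm_p k)
  rw [map_mul, map_mul, sigmaE_Gp,
    sigma_omega k (sigmaE k) (sigmaE_J k) (sigmaE_Gp k) (sigmaE_Gm k) (sigmaE_L k),
    neg_mul, mul_neg] at h
  exact neg_inj.mp h

lemma omega_comm_l (k : ℂ) : Omega k * L k = L k * Omega k := (l_central k (Omega k)).symm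

lemma omega_central (k : ℂ) : ∀ x : A k, Omega k * x = x * Omega k :=
  central_of k (Omega k) (omega_comm_j k) (omega_comm_p k) (omega_comm_m k) (omega_comm_l k)


/-- there is a unique `ℂ`-algebra automorphism `σ` of `A_k` with
`σ(J) = −J`, `σ(G⁺) = G⁻`, `σ(G⁻) = −G⁺`, `σ(L) = L`; moreover `Ω` is central in `A_k`
and every such `σ` satisfies `σ(Ω) = −Ω`. -/
theorem conjugation_automorphism (k : ℂ) :
    (∃! σ : A k ≃ₐ[ℂ] A k,
        σ (J k) = -J k ∧ σ (Gp k) = Gm k ∧ σ (Gm k) = -Gp k ∧ σ (L k) = L k) ∧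
    (∀ x : A k, Omega k * x = x * Omega k) ∧
    (∀ σ : A k ≃ₐ[ℂ] A k,
        σ (J k) = -J k → σ (Gp k) = Gm k → σ (Gm k) = -Gp k → σ (L k) = L k →
        σ (Omega k) = -Omega k) := by
  refine ⟨⟨sigmaE k, ⟨sigmaE_J k, sigmaE_Gp k, sigmaE_Gm k, sigmaE_L k⟩, ?_⟩,
    omega_central k, sigma_omega k⟩
  rintro σ' ⟨h1, h2, h3, h4⟩
  have h : (σ' : A k →ₐ[ℂ] A k) = (sigmaE k : A k →ₐ[ℂ] A k) := by
    apply algHom_ext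
    · show σ' (J k) = sigmaE k (J k); rw [h1, sigmaE_J]
    · show σ' (Gp k) = sigmaE k (Gp k); rw [h2, sigmaE_Gp]
    · show σ' (Gm k) = sigmaE k (Gm k); rw [h3, sigmaE_Gm]
    · show σ' (L k) = sigmaE k (L k); rw [h4, sigmaE_L]
  exact AlgEquiv.ext fun x => DFunLike.congr_fun h x

end BP
end
end
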